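/- Let -1 < α < ∞. There is a constant C > 0 (depending only on α) such that for every nonnegative locally integrable function f on 𝓗 and every z ∈ 𝓗, P_α^+ f(z) ≤ C (Q_α^0 f(z) + Q_α^{1/3} f(z)), where P_α^+ f(z) = ∫_𝓗 f(w) |z − w̄|^{−(2+α)} dV_α(w) and Q_α^β f = Σ_{I ∈ 𝒟^β} (|I|^{−(2+α)} ∫_{Q_I} f dV_α) · 1_{Q_I}. -/

import Mathlib

noncomputable section

open MeasureTheory Complex Set
open scoped ENNReal

/-- The upper half-plane as a subset of `ℂ`. -/
def UHP : Set ℂ := {z : ℂ | 0 < z.im}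

/-- The weighted measure `dV_α = y^α dx dy` on the upper half-plane. -/
def Vm (α : ℝ) : Measure ℂ :=
  (volume.restrict UHP).withDensity fun z => ENNReal.ofReal (z.im ^ α)

/-- The `L^p(dV_α)` norm of a function on the upper half-plane. -/
def pnorm (α p : ℝ) (f : ℂ → ℂ) : ℝ :=
  ((∫⁻ z, ENNReal.ofReal (‖f z‖ ^ p) ∂(Vm α)).toReal) ^ (1 / p)

/-- Membership in the weighted Bergman space `A_α^p` of the upper half-plane:
holomorphy on `UHP` together with finiteness of the `p`-th power integral. -/
def MemAp (α p : ℝ) (f : ℂ → ℂ) : Prop :=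
  DifferentiableOn ℂ f UHP ∧
    (∫⁻ z, ENNReal.ofReal (‖f z‖ ^ p) ∂(Vm α)) < ⊤

/-- The Bergman projection `P_α h (z) = ∫ h(w) (z - w̄)^{-(2+α)} dV_α(w)`. -/
def Pberg (α : ℝ) (h : ℂ → ℂ) : ℂ → ℂ :=
  fun z => ∫ w, h w * (z - (starRingEnd ℂ) w) ^ (-(2 + α) : ℂ) ∂(Vm α)

/-- The normalized reproducing kernel `k_w^α(z) = v^{1+α/2} (z - w̄)^{-(2+α)}`, `v = Im w`. -/
def kk (α : ℝ) (w : ℂ) : ℂ → ℂ :=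
  fun z => ((w.im : ℂ) ^ ((1 + α / 2 : ℝ) : ℂ)) * (z - (starRingEnd ℂ) w) ^ (-(2 + α) : ℂ)

/-- The Toeplitz product `T_f T_ḡ h = P_α (f ⬝ P_α (ḡ h))`. -/
def T2 (α : ℝ) (f g : ℂ → ℂ) (h : ℂ → ℂ) : ℂ → ℂ :=
  Pberg α fun z => f z * Pberg α (fun w => (starRingEnd ℂ) (g w) * h w) z

/-- Boundedness of the Toeplitz product `T_f T_ḡ` on `A_α^p`. -/
def BoundedOn (α p : ℝ) (f g : ℂ → ℂ) : Prop :=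
  ∃ C : ℝ, 0 ≤ C ∧ ∀ h, MemAp α p h → pnorm α p (T2 α f g h) ≤ C * pnorm α p h

/-- The operator norm `‖T_f T_ḡ‖` on `A_α^p` (the least admissible constant). -/
def opNorm (α p : ℝ) (f g : ℂ → ℂ) : ℝ :=
  sInf {C : ℝ | 0 ≤ C ∧ ∀ h, MemAp α p h → pnorm α p (T2 α f g h) ≤ C * pnorm α p h}

/-- Invertibility of the Toeplitz product `T_f T_ḡ` on `A_α^p`: it maps `A_α^p` to
itself, is onto (modulo values off the half-plane), and has a bounded inverse
(equivalently, is bounded below). -/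
def InvertibleOn (α p : ℝ) (f g : ℂ → ℂ) : Prop :=
  (∀ h, MemAp α p h → MemAp α p (T2 α f g h)) ∧
  (∀ u, MemAp α p u → ∃ h, MemAp α p h ∧ ∀ z ∈ UHP, T2 α f g h z = u z) ∧
  (∃ c : ℝ, 0 < c ∧ ∀ h, MemAp α p h → c * pnorm α p h ≤ pnorm α p (T2 α f g h))

/-- The quantity `[f,g]_{p,α} = sup_{w ∈ 𝓗} ‖f k_w^α‖_{p,α} ‖g k_w^α‖_{q,α}`. -/
def br (α p q : ℝ) (f g : ℂ → ℂ) : ℝ :=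
  ⨆ w : ↥UHP, pnorm α p (fun z => f z * kk α (w : ℂ) z) *
    pnorm α q (fun z => g z * kk α (w : ℂ) z)

/-- The family whose supremum is `[f,g]_{p,α}`. -/
def brFam (α p q : ℝ) (f g : ℂ → ℂ) : ↥UHP → ℝ :=
  fun w => pnorm α p (fun z => f z * kk α (w : ℂ) z) *
    pnorm α q (fun z => g z * kk α (w : ℂ) z)

/-- The Carleson box over the dyadic interval `2^j([m + (−1)^j β, m + (−1)^j β + 1))`
of the shifted dyadic grid `𝒟^β`. -/
def dyBox (β : ℝ) (j m : ℤ) : Set ℂ :=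
  {z : ℂ | ((2 : ℝ) ^ j * ((m : ℝ) + (-1 : ℝ) ^ j * β) ≤ z.re ∧
      z.re < (2 : ℝ) ^ j * ((m : ℝ) + (-1 : ℝ) ^ j * β) + (2 : ℝ) ^ j) ∧
    0 < z.im ∧ z.im < (2 : ℝ) ^ j}

/-- The positive Bergman operator `P_α^+ f(z) = ∫ f(w) |z − w̄|^{−(2+α)} dV_α(w)`,
for nonnegative `f`, valued in `ℝ≥0∞`. -/
def Pplus (α : ℝ) (f : ℂ → ℝ) (z : ℂ) : ℝ≥0∞ :=
  ∫⁻ w, ENNReal.ofReal (f w) *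
    ENNReal.ofReal (‖z - (starRingEnd ℂ) w‖ ^ (-(2 + α))) ∂(Vm α)

/-- The dyadic positive operator
`Q_α^β f = Σ_{I ∈ 𝒟^β} (|I|^{−(2+α)} ∫_{Q_I} f dV_α) 1_{Q_I}`, valued in `ℝ≥0∞`. -/
def Qop (α β : ℝ) (f : ℂ → ℝ) (z : ℂ) : ℝ≥0∞ :=
  ∑' jm : ℤ × ℤ,
    (dyBox β jm.1 jm.2).indicator
      (fun _ => ENNReal.ofReal (((2 : ℝ) ^ jm.1) ^ (-(2 + α))) *
        ∫⁻ w in dyBox β jm.1 jm.2, ENNReal.ofReal (f w) ∂(Vm α)) z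

lemma measurableSet_dyBox (β : ℝ) (j m : ℤ) : MeasurableSet (dyBox β j m) := by
  have : dyBox β j m =
      (fun z : ℂ => z.re) ⁻¹' Set.Ico ((2 : ℝ) ^ j * ((m : ℝ) + (-1 : ℝ) ^ j * β))
        ((2 : ℝ) ^ j * ((m : ℝ) + (-1 : ℝ) ^ j * β) + (2 : ℝ) ^ j) ∩
      (fun z : ℂ => z.im) ⁻¹' Set.Ioo 0 ((2 : ℝ) ^ j) := by
    ext z
    simp [dyBox, Set.mem_Ico, Set.mem_Ioo, and_assoc]
  rw [this]
  exact (Complex.measurable_re measurableSet_Ico).inter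
    (Complex.measurable_im measurableSet_Ioo)

lemma lemA (u s : ℝ) (hs : s = 1/3 ∨ s = -(1/3)) :
    (∃ m : ℤ, (m:ℝ) + 1/6 ≤ u ∧ u ≤ m + 5/6) ∨
    (∃ m : ℤ, (m:ℝ) + s + 1/6 ≤ u ∧ u ≤ (m:ℝ) + s + 5/6) := by
  have h0 : ((⌊u⌋ : ℤ) : ℝ) ≤ u := Int.floor_le u
  have h1 : u < (⌊u⌋ : ℝ) + 1 := Int.lt_floor_add_one u
  by_cases hl : (⌊u⌋ : ℝ) + 1/6 ≤ u
  · by_cases hr : u ≤ (⌊u⌋ : ℝ) + 5/6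
    · exact Or.inl ⟨⌊u⌋, hl, hr⟩
    · rcases hs with hs | hs
      · refine Or.inr ⟨⌊u⌋, ?_⟩
        push_cast; rw [hs]; constructor <;> linarith
      · refine Or.inr ⟨⌊u⌋ + 1, ?_⟩
        push_cast; rw [hs]; constructor <;> linarith
  · rcases hs with hs | hs
    · refine Or.inr ⟨⌊u⌋ - 1, ?_⟩
      push_cast; rw [hs]; constructor <;> linarith
    · refine Or.inr ⟨⌊u⌋, ?_⟩
      push_cast; rw [hs]; constructor <;> linarith

lemma geom (z w : ℂ) (hz : 0 < z.im) (hw : 0 < w.im) :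
    ∃ (β : ℝ) (j m : ℤ), (β = 0 ∨ β = 1/3) ∧ z ∈ dyBox β j m ∧ w ∈ dyBox β j m ∧
      (2:ℝ) ^ j ≤ 24 * ‖z - (starRingEnd ℂ) w‖ := by
  set p := z.re
  set q := w.re
  set D : ℝ := max (max |p - q| z.im) w.im with hDdef
  have hD : 0 < D := lt_of_lt_of_le hz (le_trans (le_max_right _ _) (le_max_left _ _))
  have hzD : z.im ≤ D := le_trans (le_max_right _ _) (le_max_left _ _)
  have hwD : w.im ≤ D := le_max_right _ _
  have hpqD : |p - q| ≤ D := le_trans (le_max_left _ _) (le_max_left _ _)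
  have hpq1 : p - q ≤ D := le_trans (le_abs_self _) hpqD
  have hpq2 : -(D) ≤ p - q := by
    have := neg_abs_le (p - q); linarith
  obtain ⟨n, hn1, hn2⟩ := exists_mem_Ico_zpow (show (0:ℝ) < 12 * D by linarith) one_lt_two
  set j : ℤ := n + 1 with hj
  set E : ℝ := (2:ℝ) ^ j with hEdef
  have hE : (0:ℝ) < E := zpow_pos (by norm_num) j
  have hE12 : 12 * D < E := hn2
  have hE24 : E ≤ 24 * D := by
    have : E = 2 * (2:ℝ) ^ n := by
      rw [hEdef, hj, zpow_add_one₀ (by norm_num : (2:ℝ) ≠ 0)]; ring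
    rw [this]; linarith
  -- abs bound
  have him : (z - (starRingEnd ℂ) w).im = z.im + w.im := by
    simp [Complex.sub_im, Complex.conj_im]
  have hre : (z - (starRingEnd ℂ) w).re = p - q := by
    simp [Complex.sub_re, Complex.conj_re, p, q]
  have hDabs : D ≤ ‖z - (starRingEnd ℂ) w‖ := by
    have h1 : |p - q| ≤ ‖z - (starRingEnd ℂ) w‖ := by
      rw [← hre]; exact Complex.abs_re_le_norm _
    have h2 : z.im + w.im ≤ ‖z - (starRingEnd ℂ) w‖ := by
      calc z.im + w.im = (z - (starRingEnd ℂ) w).im := him.symm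
        _ ≤ |(z - (starRingEnd ℂ) w).im| := le_abs_self _
        _ ≤ _ := Complex.abs_im_le_norm _
    exact max_le (max_le h1 (by linarith)) (by linarith)
  have hEabs : E ≤ 24 * ‖z - (starRingEnd ℂ) w‖ := by linarith
  -- choice of grid
  set s : ℝ := (-1:ℝ) ^ j * (1/3) with hsdef
  have hs : s = 1/3 ∨ s = -(1/3) := by
    rcases Int.even_or_odd j with hpar | hpar
    · left; rw [hsdef, hpar.neg_one_zpow]; ring
    · right; rw [hsdef, hpar.neg_one_zpow]; ring
  rcases lemA (p / E) s hs with ⟨m, hm1, hm2⟩ | ⟨m, hm1, hm2⟩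
  · refine ⟨0, j, m, Or.inl rfl, ?_, ?_, hEabs⟩
    · have hu1 : E * ((m:ℝ) + 1/6) ≤ p := (le_div_iff₀' hE).mp hm1
      have hu2 : p ≤ E * ((m:ℝ) + 5/6) := (div_le_iff₀' hE).mp hm2
      refine ⟨⟨?_, ?_⟩, hz, by linarith⟩ <;> · simp only [mul_zero, add_zero]; linarith
    · have hu1 : E * ((m:ℝ) + 1/6) ≤ p := (le_div_iff₀' hE).mp hm1
      have hu2 : p ≤ E * ((m:ℝ) + 5/6) := (div_le_iff₀' hE).mp hm2
      refine ⟨⟨?_, ?_⟩, hw, by linarith⟩ <;> · simp only [mul_zero, add_zero]; linarith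
  · refine ⟨1/3, j, m, Or.inr rfl, ?_, ?_, hEabs⟩
    · have hu1 : E * ((m:ℝ) + s + 1/6) ≤ p := (le_div_iff₀' hE).mp hm1
      have hu2 : p ≤ E * ((m:ℝ) + s + 5/6) := (div_le_iff₀' hE).mp hm2
      refine ⟨⟨?_, ?_⟩, hz, by linarith⟩ <;> · rw [← hsdef]; linarith
    · have hu1 : E * ((m:ℝ) + s + 1/6) ≤ p := (le_div_iff₀' hE).mp hm1
      have hu2 : p ≤ E * ((m:ℝ) + s + 5/6) := (div_le_iff₀' hE).mp hm2
      refine ⟨⟨?_, ?_⟩, hw, by linarith⟩ <;> · rw [← hsdef]; linarith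

def Sfun (α β : ℝ) (z w : ℂ) : ℝ≥0∞ :=
  ∑' jm : ℤ × ℤ,
    (dyBox β jm.1 jm.2).indicator
      (fun _ => (dyBox β jm.1 jm.2).indicator
        (fun _ => ENNReal.ofReal (((2 : ℝ) ^ jm.1) ^ (-(2 + α)))) z) w

set_option maxHeartbeats 1000000 in
lemma lintegral_S (α β : ℝ) (f : ℂ → ℝ)
    (hg : AEMeasurable (fun w => ENNReal.ofReal (f w)) (Vm α)) (z : ℂ) :
    ∫⁻ w, ENNReal.ofReal (f w) * Sfun α β z w ∂(Vm α) = Qop α β f z := by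
  unfold Sfun Qop
  rw [lintegral_congr (fun w => (ENNReal.tsum_mul_left).symm)]
  have hmeas : ∀ jm : ℤ × ℤ, AEMeasurable (fun w => ENNReal.ofReal (f w) *
      (dyBox β jm.1 jm.2).indicator (fun _ => (dyBox β jm.1 jm.2).indicator
        (fun _ => ENNReal.ofReal (((2 : ℝ) ^ jm.1) ^ (-(2 + α)))) z) w) (Vm α) :=
    fun jm => hg.mul
      ((measurable_const.indicator (measurableSet_dyBox β jm.1 jm.2)).aemeasurable)
  rw [lintegral_tsum hmeas]
  refine tsum_congr fun jm => ?_
  by_cases hzB : z ∈ dyBox β jm.1 jm.2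
  · simp only [Set.indicator_of_mem hzB]
    have hfun : (fun w => ENNReal.ofReal (f w) * (dyBox β jm.1 jm.2).indicator
        (fun _ => ENNReal.ofReal (((2 : ℝ) ^ jm.1) ^ (-(2 + α)))) w)
        = (dyBox β jm.1 jm.2).indicator
          (fun w => ENNReal.ofReal (((2 : ℝ) ^ jm.1) ^ (-(2 + α))) * ENNReal.ofReal (f w)) := by
      funext w
      by_cases hwB : w ∈ dyBox β jm.1 jm.2 <;>
        simp [hwB, Set.indicator_of_mem, Set.indicator_of_notMem, mul_comm]
    rw [hfun, lintegral_indicator (measurableSet_dyBox β jm.1 jm.2),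
      lintegral_const_mul' _ _ ENNReal.ofReal_ne_top]
  · simp [Set.indicator_of_notMem hzB]

lemma kernel_bound (α : ℝ) (hα : -1 < α) (z w : ℂ) (hz : 0 < z.im) (hw : 0 < w.im) :
    ENNReal.ofReal (‖z - (starRingEnd ℂ) w‖ ^ (-(2 + α))) ≤
      ENNReal.ofReal ((24 : ℝ) ^ (2 + α)) * (Sfun α 0 z w + Sfun α (1/3) z w) := by
  obtain ⟨β, j, m, hβ, hzB, hwB, hE⟩ := geom z w hz hw
  set A : ℝ := ‖z - (starRingEnd ℂ) w‖ with hAdef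
  have hA : 0 < A := by
    have him : (z - (starRingEnd ℂ) w).im = z.im + w.im := by
      simp [Complex.sub_im, Complex.conj_im]
    have h1 : z.im + w.im ≤ A := by
      calc z.im + w.im = (z - (starRingEnd ℂ) w).im := him.symm
        _ ≤ |(z - (starRingEnd ℂ) w).im| := le_abs_self _
        _ ≤ A := Complex.abs_im_le_norm _
    linarith
  have hE0 : (0:ℝ) < (2:ℝ) ^ j := zpow_pos (by norm_num) j
  have key : A ^ (-(2 + α)) ≤ (24:ℝ) ^ (2 + α) * ((2:ℝ) ^ j) ^ (-(2 + α)) := by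
    have h1 : ((24:ℝ) * A) ^ (-(2 + α)) ≤ ((2:ℝ) ^ j) ^ (-(2 + α)) :=
      Real.rpow_le_rpow_of_nonpos hE0 hE (by linarith)
    have h2 : ((24:ℝ) * A) ^ (-(2 + α)) = (24:ℝ) ^ (-(2 + α)) * A ^ (-(2 + α)) :=
      Real.mul_rpow (by norm_num) hA.le
    have h3 : (24:ℝ) ^ (2 + α) * (24:ℝ) ^ (-(2 + α)) = 1 := by
      rw [← Real.rpow_add (by norm_num : (0:ℝ) < 24), add_neg_cancel, Real.rpow_zero]
    calc A ^ (-(2 + α)) = ((24:ℝ) ^ (2 + α) * (24:ℝ) ^ (-(2 + α))) * A ^ (-(2 + α)) := by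
          rw [h3, one_mul]
      _ = (24:ℝ) ^ (2 + α) * (((24:ℝ) * A) ^ (-(2 + α))) := by rw [h2]; ring
      _ ≤ (24:ℝ) ^ (2 + α) * ((2:ℝ) ^ j) ^ (-(2 + α)) :=
          mul_le_mul_of_nonneg_left h1 (Real.rpow_nonneg (by norm_num) _)
  have hterm : ENNReal.ofReal (((2:ℝ) ^ j) ^ (-(2 + α))) ≤ Sfun α β z w := by
    have := ENNReal.le_tsum (f := fun jm : ℤ × ℤ =>
      (dyBox β jm.1 jm.2).indicator
        (fun _ => (dyBox β jm.1 jm.2).indicator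
          (fun _ => ENNReal.ofReal (((2 : ℝ) ^ jm.1) ^ (-(2 + α)))) z) w) (j, m)
    simpa [Sfun, Set.indicator_of_mem hzB, Set.indicator_of_mem hwB] using this
  calc ENNReal.ofReal (A ^ (-(2 + α)))
      ≤ ENNReal.ofReal ((24:ℝ) ^ (2 + α) * ((2:ℝ) ^ j) ^ (-(2 + α))) :=
        ENNReal.ofReal_le_ofReal key
    _ = ENNReal.ofReal ((24:ℝ) ^ (2 + α)) * ENNReal.ofReal (((2:ℝ) ^ j) ^ (-(2 + α))) :=
        ENNReal.ofReal_mul (Real.rpow_nonneg (by norm_num) _)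
    _ ≤ ENNReal.ofReal ((24:ℝ) ^ (2 + α)) * (Sfun α 0 z w + Sfun α (1/3) z w) := by
        refine mul_le_mul_right ?_ _
        rcases hβ with hβ | hβ
        · subst hβ; exact le_add_right hterm
        · subst hβ; exact le_add_left hterm

/-- For `-1 < α` there is `C > 0` depending only on `α` such that for every
nonnegative locally integrable `f` on `𝓗` and every `z ∈ 𝓗`,
`P_α^+ f(z) ≤ C (Q_α^0 f(z) + Q_α^{1/3} f(z))`. -/
theorem statement9 (α : ℝ) (hα : -1 < α) :
    ∃ C : ℝ, 0 < C ∧ ∀ f : ℂ → ℝ, (∀ z, 0 ≤ f z) →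
      MeasureTheory.LocallyIntegrableOn f UHP MeasureTheory.volume →
      ∀ z ∈ UHP, Pplus α f z ≤ ENNReal.ofReal C * (Qop α 0 f z + Qop α (1 / 3) f z) := by
  refine ⟨(24:ℝ) ^ (2 + α), Real.rpow_pos_of_pos (by norm_num) _, ?_⟩
  intro f hf hloc z hzU
  have hUmeas : MeasurableSet UHP :=
    (isOpen_lt continuous_const Complex.continuous_im).measurableSet
  have hac : Vm α ≪ volume.restrict UHP := withDensity_absolutelyContinuous _ _
  have hg : AEMeasurable (fun w => ENNReal.ofReal (f w)) (Vm α) :=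
    (ENNReal.measurable_ofReal.comp_aemeasurable
      hloc.aestronglyMeasurable.aemeasurable).mono_ac hac
  have hae : ∀ᵐ w ∂(Vm α), w ∈ UHP := hac.ae_le (ae_restrict_mem hUmeas)
  have hSmeas : ∀ β : ℝ, Measurable fun w => Sfun α β z w := fun β =>
    Measurable.ennreal_tsum fun jm =>
      measurable_const.indicator (measurableSet_dyBox β jm.1 jm.2)
  set C : ℝ≥0∞ := ENNReal.ofReal ((24:ℝ) ^ (2 + α)) with hC
  calc Pplus α f z
      ≤ ∫⁻ w, ENNReal.ofReal (f w) * (C * (Sfun α 0 z w + Sfun α (1/3) z w)) ∂(Vm α) := by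
        unfold Pplus
        refine lintegral_mono_ae (hae.mono fun w hw => ?_)
        exact mul_le_mul_right (kernel_bound α hα z w hzU hw) _
    _ = C * ((∫⁻ w, ENNReal.ofReal (f w) * Sfun α 0 z w ∂(Vm α)) +
          ∫⁻ w, ENNReal.ofReal (f w) * Sfun α (1/3) z w ∂(Vm α)) := by
        have h1 : ∀ w, ENNReal.ofReal (f w) * (C * (Sfun α 0 z w + Sfun α (1/3) z w)) =
            C * (ENNReal.ofReal (f w) * Sfun α 0 z w +
              ENNReal.ofReal (f w) * Sfun α (1/3) z w) := fun w => by ring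
        rw [lintegral_congr h1, lintegral_const_mul' _ _ ENNReal.ofReal_ne_top,
          lintegral_add_left' (f := fun w => ENNReal.ofReal (f w) * Sfun α 0 z w) (hg.mul (hSmeas 0).aemeasurable)]
    _ = C * (Qop α 0 f z + Qop α (1/3) f z) := by
        rw [lintegral_S α 0 f hg z, lintegral_S α (1/3) f hg z]
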